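/- In every resource contribution game with exactly two players, public contention and private contention coincide: for each player i, cont-prof(G,1) = cont-prof(G,2) = cont-prof(G) on profiles, hence good^ca(G,i) = good^pca(G,i) for both players, and consequently NE^ca(G) = NE^pca(G). -/

import Mathlib

open scoped Classical

/-- A resource contribution game over atomic resource type `Res` with player set `ι`:
each player has a goal (a resource bundle, i.e. a multiset of atomic resources) and
an endowment (a resource bag, i.e. a multiset of resource bundles). -/
structure RCG (Res ι : Type*) where
  goal : ι → Multiset Res
  endow : ι → Multiset (Multiset Res)

namespace RCG

variable {Res ι : Type*} [Fintype ι]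

/-- A profile assigns to each player a bag (his contribution). -/
abbrev Profile (Res ι : Type*) := ι → Multiset (Multiset Res)

/-- Outcome of a profile: the multiset sum of all contributions. -/
def out (P : Profile Res ι) : Multiset (Multiset Res) := ∑ i, P i

/-- The bag `X` can be transformed into the bundle `B`: `♭(B) ⊆ ♭•(X)`. -/
def Trans (X : Multiset (Multiset Res)) (B : Multiset Res) : Prop := B ≤ X.sum

/-- Player `i` is potentially satisfied by profile `P`. -/
def Psat (G : RCG Res ι) (P : Profile Res ι) (i : ι) : Prop :=
  Trans (out P) (G.goal i)

/-- The set of players potentially satisfied by `P`. -/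
noncomputable def psatPlayers (G : RCG Res ι) (P : Profile Res ι) : Finset ι :=
  Finset.univ.filter fun i => Psat G P i

/-- The profile `P` is contentious. -/
def Contentious (G : RCG Res ι) (P : Profile Res ι) : Prop :=
  ¬ Trans (out P) (∑ j ∈ psatPlayers G P, G.goal j)

/-- Restriction of bundle `B` to the resource types occurring in `C`. -/
noncomputable def restr (B C : Multiset Res) : Multiset Res := B.filter (· ∈ C)

/-- The profile `P` is contentious for player `i`. -/
def ContentiousFor (G : RCG Res ι) (P : Profile Res ι) (i : ι) : Prop :=
  Psat G P i ∧ ¬ Trans (out P) (∑ j ∈ psatPlayers G P, restr (G.goal j) (G.goal i))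

/-- The three kinds of preferences: contention-tolerant, (public) contention-averse,
private contention-averse. -/
inductive Pref | ct | ca | pca

/-- `P` is a good profile for player `i` according to preference kind `pref`. -/
def Good (pref : Pref) (G : RCG Res ι) (P : Profile Res ι) (i : ι) : Prop :=
  match pref with
  | .ct => Psat G P i
  | .ca => Psat G P i ∧ ¬ Contentious G P
  | .pca => Psat G P i ∧ ¬ ContentiousFor G P i

/-- Player `i` strictly prefers `P` over `Q` (i.e. `Q ≺^pref_i P`). -/
def Prefers (pref : Pref) (G : RCG Res ι) (i : ι) (Q P : Profile Res ι) : Prop :=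
  (¬ Good pref G P i ∧ ¬ Good pref G Q i ∧ P i < Q i) ∨
  (Good pref G P i ∧ ¬ Good pref G Q i) ∨
  (Good pref G P i ∧ Good pref G Q i ∧ P i < Q i)

/-- `C` is a profitable deviation for player `i` from profile `P`. -/
noncomputable def ProfDev (pref : Pref) (G : RCG Res ι) (P : Profile Res ι) (i : ι)
    (C : Multiset (Multiset Res)) : Prop :=
  C ≤ G.endow i ∧ Prefers pref G i P (Function.update P i C)

/-- `P` is a pure Nash equilibrium of `G` according to `pref`:
`P` is a profile of `G` and no player has a profitable deviation. -/
noncomputable def NE (pref : Pref) (G : RCG Res ι) (P : Profile Res ι) : Prop :=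
  (∀ i, P i ≤ G.endow i) ∧ ∀ i C, ¬ ProfDev pref G P i C

/-- `G` is an RCG with endowments as bags of atomic resources. -/
def IsRCGBAR (G : RCG Res ι) : Prop :=
  ∀ i, ∀ B ∈ G.endow i, ∃ r : Res, B = {r}

/-- `G` has independent objectives. -/
def IndepObjectives (G : RCG Res ι) : Prop :=
  ∀ i j : ι, i ≠ j → ∀ r : Res, r ∈ G.goal i → r ∉ G.goal j

end RCG

lemma aux_add_filter_le_iff {Res : Type*} (a b M : Multiset Res) (hb : b ≤ M) :
    a + b ≤ M ↔ a + b.filter (· ∈ a) ≤ M := by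
  constructor
  · intro h
    exact le_trans (add_le_add_right (Multiset.filter_le _ b) a) h
  · intro h
    rw [Multiset.le_iff_count] at *
    intro r
    rw [Multiset.count_add]
    by_cases hr : r ∈ a
    · have := h r
      rw [Multiset.count_add, Multiset.count_filter, if_pos hr] at this
      exact this
    · rw [Multiset.count_eq_zero_of_notMem hr, zero_add]
      exact hb r

lemma aux_restr_self {Res : Type*} (a : Multiset Res) : RCG.restr a a = a := by
  unfold RCG.restr
  rw [Multiset.filter_eq_self]
  exact fun _ h => h

lemma aux_key {Res : Type*} (G : RCG Res (Fin 2)) (P : RCG.Profile Res (Fin 2)) (i : Fin 2) :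
    RCG.ContentiousFor G P i ↔ RCG.Contentious G P := by
  classical
  unfold RCG.ContentiousFor RCG.Contentious
  rw [RCG.psatPlayers, Finset.sum_filter, Finset.sum_filter, Fin.sum_univ_two,
    Fin.sum_univ_two]
  set M := (RCG.out P).sum with hM
  have hPsat : ∀ j : Fin 2, RCG.Psat G P j ↔ G.goal j ≤ M := fun j => Iff.rfl
  have hTrans : ∀ b : Multiset Res, RCG.Trans (RCG.out P) b ↔ b ≤ M := fun b => Iff.rfl
  by_cases h0 : RCG.Psat G P 0 <;> by_cases h1 : RCG.Psat G P 1 <;>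
    simp only [h0, h1, if_pos, if_neg, if_true, if_false, hTrans, add_zero, zero_add,
      not_true, not_false_iff]
  · -- both psat
    have hg0 : G.goal 0 ≤ M := (hPsat 0).mp h0
    have hg1 : G.goal 1 ≤ M := (hPsat 1).mp h1
    have hi : i = 0 ∨ i = 1 := by omega
    rcases hi with rfl | rfl
    · rw [aux_restr_self]
      have := aux_add_filter_le_iff (G.goal 0) (G.goal 1) M hg1
      unfold RCG.restr
      constructor
      · rintro ⟨_, h⟩ hc
        exact h (this.mp hc)
      · intro h
        exact ⟨h0, fun hc => h (this.mpr hc)⟩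
    · rw [aux_restr_self]
      have := aux_add_filter_le_iff (G.goal 1) (G.goal 0) M hg0
      unfold RCG.restr
      constructor
      · rintro ⟨_, h⟩ hc
        rw [add_comm] at hc
        exact h (by rw [add_comm]; exact this.mp hc)
      · intro h
        refine ⟨h1, fun hc => h ?_⟩
        rw [add_comm] at hc
        rw [add_comm]
        exact this.mpr hc
  · -- only 0 psat
    have hg0 : G.goal 0 ≤ M := (hPsat 0).mp h0
    constructor
    · rintro ⟨hpi, h⟩ _
      have hi : i = 0 ∨ i = 1 := by omega
      rcases hi with rfl | rfl
      · exact h (by rw [aux_restr_self]; exact hg0)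
      · exact h (le_trans (Multiset.filter_le _ _) hg0)
    · intro h
      exact absurd hg0 h
  · -- only 1 psat
    have hg1 : G.goal 1 ≤ M := (hPsat 1).mp h1
    constructor
    · rintro ⟨hpi, h⟩ _
      have hi : i = 0 ∨ i = 1 := by omega
      rcases hi with rfl | rfl
      · exact h (le_trans (Multiset.filter_le _ _) hg1)
      · exact h (by rw [aux_restr_self]; exact hg1)
    · intro h
      exact absurd hg1 h
  · -- none psat
    constructor
    · rintro ⟨hpi, _⟩
      have hi : i = 0 ∨ i = 1 := by omega
      rcases hi with rfl | rfl
      · exact absurd hpi h0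
      · exact absurd hpi h1
    · intro h
      exact absurd (le_refl (0 : Multiset Res) |>.trans (Multiset.zero_le M)) h

lemma aux_good {Res : Type*} (G : RCG Res (Fin 2)) (P : RCG.Profile Res (Fin 2)) (i : Fin 2) :
    RCG.Good .ca G P i ↔ RCG.Good .pca G P i := by
  unfold RCG.Good
  rw [aux_key G P i]

lemma aux_prefers {Res : Type*} (G : RCG Res (Fin 2)) (i : Fin 2)
    (Q P : RCG.Profile Res (Fin 2)) :
    RCG.Prefers .ca G i Q P ↔ RCG.Prefers .pca G i Q P := by
  unfold RCG.Prefers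
  rw [aux_good G P i, aux_good G Q i]

/-- in a two-player game, public and private contention coincide:
for each player, contention for that player coincides with contention, good profiles
for `ca` and `pca` coincide, and `NE^ca(G) = NE^pca(G)`. -/
theorem two_player_contention_coincide {Res : Type*} (G : RCG Res (Fin 2)) :
    (∀ P : RCG.Profile Res (Fin 2), (∀ i, P i ≤ G.endow i) →
      (∀ i : Fin 2, RCG.ContentiousFor G P i ↔ RCG.Contentious G P) ∧
      (∀ i : Fin 2, RCG.Good .ca G P i ↔ RCG.Good .pca G P i)) ∧
    (∀ P : RCG.Profile Res (Fin 2), RCG.NE .ca G P ↔ RCG.NE .pca G P) := by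
  refine ⟨fun P _ => ⟨fun i => aux_key G P i, fun i => aux_good G P i⟩, fun P => ?_⟩
  unfold RCG.NE RCG.ProfDev
  constructor
  · rintro ⟨h1, h2⟩
    refine ⟨h1, fun i C hC => h2 i C ⟨hC.1, (aux_prefers G i P _).mpr hC.2⟩⟩
  · rintro ⟨h1, h2⟩
    refine ⟨h1, fun i C hC => h2 i C ⟨hC.1, (aux_prefers G i P _).mp hC.2⟩⟩
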